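/- Let N ≥ 1 and let U be a unitary N × N complex matrix such that every row of U has at most one nonzero entry. Let T ≥ 1 and 1 ≤ t ≤ T, and define the matrix H_t on ℂ^{T+1} ⊗ ℂ^N by H_t = (1/2)(E_{t,t} + E_{t−1,t−1}) ⊗ I_N − (1/2) E_{t,t−1} ⊗ U − (1/2) E_{t−1,t} ⊗ Uᴴ, where E_{i,j} is the (T+1) × (T+1) matrix unit with a 1 in position (i,j) and zeros elsewhere, ⊗ is the Kronecker product, and Uᴴ is the conjugate transpose. Then every row of H_t has at most 2 nonzero entries. -/

import Mathlib

open scoped Kronecker Matrix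

/-- **Row-sparsity of the propagation terms of Kitaev's Hamiltonian.**
If `U` is a unitary `N × N` matrix with at most one nonzero entry per row (e.g. a
controlled-swap on arbitrarily many qubits), then each propagation term
`H_t = ½(E_{t,t} + E_{t−1,t−1}) ⊗ I − ½ E_{t,t−1} ⊗ U − ½ E_{t−1,t} ⊗ Uᴴ`
has at most `2` nonzero entries in each row. -/
theorem propagation_term_row_sparse
    {N : ℕ} (hN : 1 ≤ N) (U : Matrix (Fin N) (Fin N) ℂ)
    (hU : Uᴴ * U = 1)
    (hU_sparse : ∀ i : Fin N, (Finset.univ.filter fun j : Fin N => U i j ≠ 0).card ≤ 1)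
    (T t : ℕ) (hT : 1 ≤ T) (ht₁ : 1 ≤ t) (ht₂ : t ≤ T)
    (Ht : Matrix (Fin (T + 1) × Fin N) (Fin (T + 1) × Fin N) ℂ)
    (hHt : Ht =
      (1 / 2 : ℂ) • ((Matrix.single (⟨t, by omega⟩ : Fin (T + 1)) ⟨t, by omega⟩ 1
            + Matrix.single (⟨t - 1, by omega⟩ : Fin (T + 1)) ⟨t - 1, by omega⟩ 1)
          ⊗ₖ (1 : Matrix (Fin N) (Fin N) ℂ))
        - (1 / 2 : ℂ) • ((Matrix.single (⟨t, by omega⟩ : Fin (T + 1)) ⟨t - 1, by omega⟩ 1)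
          ⊗ₖ U)
        - (1 / 2 : ℂ) • ((Matrix.single (⟨t - 1, by omega⟩ : Fin (T + 1)) ⟨t, by omega⟩ 1)
          ⊗ₖ Uᴴ)) :
    ∀ r : Fin (T + 1) × Fin N,
      (Finset.univ.filter fun c : Fin (T + 1) × Fin N => Ht r c ≠ 0).card ≤ 2 := by
  -- column sparsity of U
  have hUU : U * Uᴴ = 1 := mul_eq_one_comm.mp hU
  have hrow : ∀ i j k : Fin N, U i j ≠ 0 → k ≠ j → U i k = 0 := by
    intro i j k hj hk
    by_contra hknz
    have h1 := Finset.card_le_one.mp (hU_sparse i)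
    exact hk (h1 k (by simp [hknz]) j (by simp [hj]))
  have hcol : ∀ j : Fin N, (Finset.univ.filter fun i : Fin N => U i j ≠ 0).card ≤ 1 := by
    intro j
    rw [Finset.card_le_one]
    intro i1 h1 i2 h2
    simp only [Finset.mem_filter] at h1 h2
    by_contra hne
    have h0 : (U * Uᴴ) i1 i2 = 0 := by rw [hUU]; simp [Matrix.one_apply, hne]
    rw [Matrix.mul_apply] at h0
    rw [Finset.sum_eq_single j] at h0
    · exact (mul_ne_zero h1.2 (by simp [Matrix.conjTranspose_apply, star_ne_zero, h2.2])) h0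
    · intro k _ hk
      rw [hrow i1 j k h1.2 hk, zero_mul]
    · simp
  set τ : Fin (T + 1) := ⟨t, by omega⟩ with hτ
  set τ' : Fin (T + 1) := ⟨t - 1, by omega⟩ with hτ'
  have hττ' : τ ≠ τ' := by simp only [hτ, hτ', ne_eq, Fin.mk.injEq]; omega
  have hentry : ∀ p q (c : Fin (T + 1) × Fin N), Ht (p, q) c =
      ((if q = c.2 then
          2⁻¹ * ((if τ = p ∧ τ = c.1 then 1 else 0) + if τ' = p ∧ τ' = c.1 then 1 else 0)
        else 0)
        - if τ = p ∧ τ' = c.1 then 2⁻¹ * U q c.2 else 0)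
        - if τ' = p ∧ τ = c.1 then 2⁻¹ * (starRingEnd ℂ) (U c.2 q) else 0 := by
    intro p q c
    rw [hHt]
    simp [Matrix.single, Matrix.one_apply]
  rintro ⟨p, q⟩
  by_cases hpτ : p = τ
  · -- row with time index t
    have hsub : (Finset.univ.filter fun c : Fin (T + 1) × Fin N => Ht (p, q) c ≠ 0) ⊆
        insert (τ, q) (({τ'} : Finset (Fin (T + 1))) ×ˢ
          (Finset.univ.filter fun j : Fin N => U q j ≠ 0)) := by
      intro c hc
      simp only [Finset.mem_filter, Finset.mem_univ, true_and] at hc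
      rw [hentry p q c] at hc
      simp only [Finset.mem_insert, Finset.mem_product, Finset.mem_singleton,
        Finset.mem_filter, Finset.mem_univ, true_and]
      subst hpτ
      have hA : ¬(τ' = τ) := fun h => hττ' h.symm
      by_cases h1 : τ = c.1
      · left
        have hB : ¬(τ' = c.1) := fun h => hττ' (h1.trans h.symm)
        have h2 : q = c.2 := by
          by_contra hne
          exact hc (by simp [h1, hne, hA, hB])
        exact Prod.ext h1.symm h2.symm
      · by_cases h2 : τ' = c.1
        · right
          refine ⟨h2.symm, ?_⟩
          by_contra hz
          have hB : ¬(c.1 = τ) := fun h => h1 h.symm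
          exact hc (by simp [h1, h2, hz, hA, hB])
        · exact absurd (by simp [h1, h2, hA]) hc
    refine (Finset.card_le_card hsub).trans ?_
    refine (Finset.card_insert_le _ _).trans ?_
    have := hU_sparse q
    rw [Finset.card_product, Finset.card_singleton, one_mul]
    omega
  · by_cases hpτ' : p = τ'
    · -- row with time index t - 1
      have hsub : (Finset.univ.filter fun c : Fin (T + 1) × Fin N => Ht (p, q) c ≠ 0) ⊆
          insert (τ', q) (({τ} : Finset (Fin (T + 1))) ×ˢ
            (Finset.univ.filter fun i : Fin N => U i q ≠ 0)) := by
        intro c hc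
        simp only [Finset.mem_filter, Finset.mem_univ, true_and] at hc
        rw [hentry p q c] at hc
        simp only [Finset.mem_insert, Finset.mem_product, Finset.mem_singleton,
          Finset.mem_filter, Finset.mem_univ, true_and]
        subst hpτ'
        have hA : ¬(τ = τ') := hττ'
        by_cases h1 : τ' = c.1
        · left
          have hB : ¬(τ = c.1) := fun h => hττ' (h.trans h1.symm)
          have h2 : q = c.2 := by
            by_contra hne
            exact hc (by simp [h1, hne, hA, hB])
          exact Prod.ext h1.symm h2.symm
        · by_cases h2 : τ = c.1
          · right
            refine ⟨h2.symm, ?_⟩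
            have hz : (starRingEnd ℂ) (U c.2 q) ≠ 0 := by
              by_contra hz
              have hB : ¬(c.1 = τ') := fun h => h1 h.symm
              exact hc (by simp [h1, h2, hz, hA, hB])
            simpa using hz
          · exact absurd (by simp [h1, h2, hA]) hc
      refine (Finset.card_le_card hsub).trans ?_
      refine (Finset.card_insert_le _ _).trans ?_
      have := hcol q
      rw [Finset.card_product, Finset.card_singleton, one_mul]
      omega
    · -- other rows are zero
      have hempty : (Finset.univ.filter fun c : Fin (T + 1) × Fin N => Ht (p, q) c ≠ 0) = ∅ := by
        rw [Finset.filter_eq_empty_iff]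
        intro c _
        have hA : ¬(τ = p) := fun h => hpτ h.symm
        have hB : ¬(τ' = p) := fun h => hpτ' h.symm
        rw [hentry p q c]
        simp [hA, hB]
      rw [hempty]
      simp
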